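/- Consider the polynomials f = −(1+x²)·y and g = x in ℝ[x,y]; their Jacobian D(f,g) = 1 + x² is nonvanishing on ℝ² but not constant. The flow of the Hamiltonian vector field H_f = (1+x², −2xy) is not complete: there is no differentiable curve γ : ℝ → ℝ² defined on all of ℝ with γ(0) = (0,0) and γ'(t) = (1 + γ₁(t)², −2·γ₁(t)·γ₂(t)) for all t ∈ ℝ. -/

import Mathlib

open MvPolynomial

/-- Evaluation of a bivariate real polynomial at a point of the plane. -/
noncomputable def evalP (f : MvPolynomial (Fin 2) ℝ) (p : ℝ × ℝ) : ℝ :=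
  eval ![p.1, p.2] f

/-- The Jacobian polynomial D(f,g) = f_x g_y - f_y g_x. -/
noncomputable def jacD (f g : MvPolynomial (Fin 2) ℝ) : MvPolynomial (Fin 2) ℝ :=
  pderiv 0 f * pderiv 1 g - pderiv 1 f * pderiv 0 g

/-- The Hamiltonian vector field H_f(p) = (-f_y(p), f_x(p)). -/
noncomputable def ham (f : MvPolynomial (Fin 2) ℝ) (p : ℝ × ℝ) : ℝ × ℝ :=
  (-(evalP (pderiv 1 f) p), evalP (pderiv 0 f) p)

/-- For f = -(1+x²)y and g = x, the Jacobian D(f,g) = 1 + x² is nonvanishing but not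
constant, H_f = (1+x², -2xy), and the flow of H_f is not complete: no solution of
γ' = H_f(γ) through the origin is defined on all of ℝ. -/
theorem ham_flow_not_complete_example :
    jacD (-((1 + (X 0) ^ 2) * X 1)) (X 0) = 1 + (X 0) ^ 2 ∧
    (∀ p : ℝ × ℝ, evalP (jacD (-((1 + (X 0) ^ 2) * X 1)) (X 0)) p ≠ 0) ∧
    (¬ ∃ c : ℝ, jacD (-((1 + (X 0) ^ 2) * X 1)) (X 0) = C c) ∧
    (∀ p : ℝ × ℝ, ham (-((1 + (X 0) ^ 2) * X 1)) p = (1 + p.1 ^ 2, -2 * p.1 * p.2)) ∧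
    ¬ ∃ γ : ℝ → ℝ × ℝ, γ 0 = (0, 0) ∧
        ∀ t : ℝ, HasDerivAt γ (1 + (γ t).1 ^ 2, -2 * (γ t).1 * (γ t).2) t := by
  refine ⟨?_, ?_, ?_, ?_, ?_⟩
  · simp [jacD, pow_two]
  · intro p
    have : evalP (jacD (-((1 + (X 0) ^ 2) * X 1)) (X 0)) p = 1 + p.1 ^ 2 := by
      simp [jacD, evalP, pow_two]
    rw [this]
    positivity
  · rintro ⟨c, hc⟩
    have h : (1 + (X 0 : MvPolynomial (Fin 2) ℝ) ^ 2) = C c := by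
      rw [← hc]; simp [jacD, pow_two]
    have h0 : (1 : ℝ) + (0 : ℝ) ^ 2 = c := by
      have := congrArg (eval ![(0 : ℝ), 0]) h
      simpa using this
    have h1 : (1 : ℝ) + (1 : ℝ) ^ 2 = c := by
      have := congrArg (eval ![(1 : ℝ), 0]) h
      simpa using this
    norm_num at h0 h1
    linarith
  · intro p
    simp [ham, evalP, pow_two]
    ring
  · rintro ⟨γ, h0, hd⟩
    set x : ℝ → ℝ := fun t => (γ t).1 with hx
    have hx0 : x 0 = 0 := by simp [hx, h0]
    have hdx : ∀ t, HasDerivAt x (1 + x t ^ 2) t := fun t => (hd t).fst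
    -- φ t = arctan (x t) - t has zero derivative
    set φ : ℝ → ℝ := fun t => Real.arctan (x t) - t with hφ
    have hdφ : ∀ t, HasDerivAt φ 0 t := by
      intro t
      have h1 : HasDerivAt (fun t => Real.arctan (x t))
          (1 / (1 + x t ^ 2) * (1 + x t ^ 2)) t := (hdx t).arctan
      have hpos : (1 : ℝ) + x t ^ 2 ≠ 0 := by positivity
      rw [one_div, inv_mul_cancel₀ hpos] at h1
      have h2 := h1.sub (hasDerivAt_id' t)
      rw [sub_self] at h2
      exact h2
    have hconst : ∀ t, φ t = φ 0 := by
      intro t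
      exact is_const_of_deriv_eq_zero (fun s => (hdφ s).differentiableAt)
        (fun s => (hdφ s).deriv) t 0
    have h2 := hconst 2
    have : Real.arctan (x 2) = 2 := by
      simp [hφ, hx0, Real.arctan_zero] at h2
      linarith
    have hlt : Real.arctan (x 2) < Real.pi / 2 := Real.arctan_lt_pi_div_two _
    have hpi : Real.pi < 4 := by
      linarith [Real.pi_lt_d2]
    linarith
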